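/- arXiv:1312.7820 — 2 statements merged into one kernel-verified Lean document; each statement's English description precedes it below -/
import Mathlib

section
/- If v ∈ F₃, then dim_ℚ(v₁, v₂, v₃) = 3; that is, v₁, v₂, v₃ are linearly independent over ℚ (equivalently, the only x ∈ ℤ³ with ⟨v, x⟩ = 0 is x = 0). -/
open Matrix
open scoped Classical

noncomputable section

abbrev Z3 := Fin 3 → ℤ
abbrev R3 := Fin 3 → ℝ

/-- The inner product `⟨x, v⟩` of an integer vector with a real vector. -/
def dot3 (x : Z3) (v : R3) : ℝ := ∑ i, (x i : ℝ) * v i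

/-- Two points of `ℤ³` are 2-adjacent if `‖x − y‖₁ = 1`. -/
def adj3 (x y : Z3) : Prop := (∑ i, |x i - y i|) = 1

/-- A subset of `ℤ³` is 2-connected if it is nonempty and any two of its points are
joined by a finite chain of points of the set with consecutive points 2-adjacent. -/
def Connected3 (A : Set Z3) : Prop :=
  A.Nonempty ∧ ∀ x ∈ A, ∀ y ∈ A,
    Relation.ReflTransGen (fun a b => b ∈ A ∧ adj3 a b) x y

/-- The arithmetical discrete plane `P(v, ω)`. -/
def Plane (v : R3) (ω : ℝ) : Set Z3 := {x | 0 ≤ dot3 x v ∧ dot3 x v < ω}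

/-- The connecting thickness `Ω(v)`. -/
def omegaConn (v : R3) : ℝ := sInf {ω : ℝ | 0 ≤ ω ∧ Connected3 (Plane v ω)}

/-- `O₃⁺ = {v : 0 ≤ v₁ ≤ v₂ ≤ v₃}`. -/
def O3 : Set R3 := {v | 0 ≤ v 0 ∧ v 0 ≤ v 1 ∧ v 1 ≤ v 2}

/-- The ordered fully subtractive map. -/
def FS (v : R3) : R3 :=
  if v 0 ≤ v 1 - v 0 ∧ v 1 - v 0 ≤ v 2 - v 0 then ![v 0, v 1 - v 0, v 2 - v 0]
  else if v 1 - v 0 < v 0 ∧ v 0 ≤ v 2 - v 0 then ![v 1 - v 0, v 0, v 2 - v 0]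
  else ![v 1 - v 0, v 2 - v 0, v 0]

/-- `F₃ = {v ∈ O₃⁺ : v₁⁽ⁿ⁾ + v₂⁽ⁿ⁾ > v₃⁽ⁿ⁾ for all n}`. -/
def F3set : Set R3 :=
  {v | v ∈ O3 ∧ ∀ n : ℕ, (FS^[n] v) 2 < (FS^[n] v) 0 + (FS^[n] v) 1}

/-- Branch index of `F` at `v`: values `0, 1, 2` encode the branches labelled `1, 2, 3`. -/
def FSidx (v : R3) : Fin 3 :=
  if v 0 ≤ v 1 - v 0 ∧ v 1 - v 0 ≤ v 2 - v 0 then 0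
  else if v 1 - v 0 < v 0 ∧ v 0 ≤ v 2 - v 0 then 1
  else 2

/-- The matrices `M₁, M₂, M₃` of the fully subtractive algorithm. -/
def Mmat : Fin 3 → Matrix (Fin 3) (Fin 3) ℤ :=
  ![!![1,0,0; 1,1,0; 1,0,1], !![0,1,0; 1,1,0; 0,1,1], !![0,0,1; 1,0,1; 0,1,1]]

def e1 : Z3 := ![1,0,0]

/-- The product `M₁ ⋯ Mₙ` of the matrices associated with the F-expansion of `v`. -/
def prodM (v : R3) (n : ℕ) : Matrix (Fin 3) (Fin 3) ℤ :=
  ((List.range n).map (fun j => Mmat (FSidx (FS^[j] v)))).prod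

/-- The translation vector `((M₁⋯Mₙ)ᵀ)⁻¹ · e₁`. -/
def transVec (v : R3) (n : ℕ) : Z3 := ((prodM v n)ᵀ)⁻¹ *ᵥ e1

/-- The sequence `Tₙ` of subsets of `ℤ³`: `T₀ = {0}`, `T_{n+1} = Tₙ ∪ (Tₙ + ((M₁⋯Mₙ)ᵀ)⁻¹·e₁)`
(so that `T₁ = {0, e₁}`, the empty matrix product being the identity). -/
def Tseq (v : R3) : ℕ → Set Z3
  | 0 => {0}
  | n + 1 => Tseq v n ∪ ((fun x => x + transVec v n) '' Tseq v n)

-- auxiliary developments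

abbrev cond1 (v : R3) : Prop := v 0 ≤ v 1 - v 0 ∧ v 1 - v 0 ≤ v 2 - v 0
abbrev cond2 (v : R3) : Prop := v 1 - v 0 < v 0 ∧ v 0 ≤ v 2 - v 0

lemma not_cond1_of_cond2 {v : R3} (h : cond2 v) : ¬ cond1 v := by
  rintro ⟨a, _⟩; exact absurd a (not_le.2 h.1)

lemma FS_c1 {v : R3} (h : cond1 v) : FS v = ![v 0, v 1 - v 0, v 2 - v 0] := by
  rw [FS, if_pos h]

lemma FS_c2 {v : R3} (h : cond2 v) : FS v = ![v 1 - v 0, v 0, v 2 - v 0] := by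
  rw [FS, if_neg (not_cond1_of_cond2 h), if_pos h]

lemma FS_c3 {v : R3} (h1 : ¬ cond1 v) (h2 : ¬ cond2 v) :
    FS v = ![v 1 - v 0, v 2 - v 0, v 0] := by
  rw [FS, if_neg h1, if_neg h2]

lemma FS_mem_O3 {v : R3} (hv : v ∈ O3) : FS v ∈ O3 := by
  obtain ⟨h0, h01, h12⟩ := hv
  by_cases h1 : cond1 v
  · rw [FS_c1 h1]
    refine ⟨h0, ?_, ?_⟩ <;> simp <;> linarith [h1.1, h1.2]
  · by_cases h2 : cond2 v
    · rw [FS_c2 h2]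
      refine ⟨?_, ?_, ?_⟩ <;> simp <;> linarith [h2.1, h2.2]
    · rw [FS_c3 h1 h2]
      have hA : v 1 - v 0 < v 0 := by
        by_contra hA; push_neg at hA; exact h1 ⟨hA, by linarith⟩
      have hB : v 2 - v 0 < v 0 := by
        by_contra hB; push_neg at hB; exact h2 ⟨hA, hB⟩
      refine ⟨?_, ?_, ?_⟩ <;> simp <;> linarith

lemma F3_FS {v : R3} (hv : v ∈ F3set) : FS v ∈ F3set := by
  refine ⟨FS_mem_O3 hv.1, fun n => ?_⟩
  have := hv.2 (n + 1)
  rwa [Function.iterate_succ_apply] at this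

lemma F3_iter {v : R3} (hv : v ∈ F3set) (n : ℕ) : FS^[n] v ∈ F3set := by
  induction n with
  | zero => exact hv
  | succ n ih => rw [Function.iterate_succ_apply']; exact F3_FS ih

lemma F3_tri {v : R3} (hv : v ∈ F3set) : v 2 < v 0 + v 1 := by
  have := hv.2 0; simpa using this

lemma F3_pos {v : R3} (hv : v ∈ F3set) : 0 < v 0 := by
  have h0 := hv.1.1
  have h01 := hv.1.2.1
  have h12 := hv.1.2.2
  have htri := F3_tri hv
  rcases h0.lt_or_eq with h | h
  · exact h
  · exfalso; rw [← h] at h01; linarith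
def step (v : R3) (y : Z3) : Z3 :=
  if v 0 ≤ v 1 - v 0 ∧ v 1 - v 0 ≤ v 2 - v 0 then ![y 0 + y 1 + y 2, y 1, y 2]
  else if v 1 - v 0 < v 0 ∧ v 0 ≤ v 2 - v 0 then ![y 1, y 0 + y 1 + y 2, y 2]
  else ![y 1, y 2, y 0 + y 1 + y 2]

lemma step_c1 {v : R3} (h : cond1 v) (y : Z3) :
    step v y = ![y 0 + y 1 + y 2, y 1, y 2] := by rw [step, if_pos h]

lemma step_c2 {v : R3} (h : cond2 v) (y : Z3) :
    step v y = ![y 1, y 0 + y 1 + y 2, y 2] := by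
  rw [step, if_neg (not_cond1_of_cond2 h), if_pos h]

lemma step_c3 {v : R3} (h1 : ¬ cond1 v) (h2 : ¬ cond2 v) (y : Z3) :
    step v y = ![y 1, y 2, y 0 + y 1 + y 2] := by rw [step, if_neg h1, if_neg h2]

lemma dot3_step (v : R3) (y : Z3) : dot3 (step v y) (FS v) = dot3 y v := by
  by_cases h1 : cond1 v
  · rw [step_c1 h1, FS_c1 h1, dot3, dot3, Fin.sum_univ_three, Fin.sum_univ_three]
    simp; push_cast; ring
  · by_cases h2 : cond2 v
    · rw [step_c2 h2, FS_c2 h2, dot3, dot3, Fin.sum_univ_three, Fin.sum_univ_three]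
      simp; push_cast; ring
    · rw [step_c3 h1 h2, FS_c3 h1 h2, dot3, dot3, Fin.sum_univ_three, Fin.sum_univ_three]
      simp; push_cast; ring

lemma step_ne_zero {v : R3} {y : Z3} (hy : y ≠ 0) : step v y ≠ 0 := by
  intro h
  apply hy
  have hc : ∀ i, step v y i = 0 := fun i => congrFun h i
  by_cases h1 : cond1 v
  · rw [step_c1 h1] at hc
    have e0 := hc 0; have e1 := hc 1; have e2 := hc 2
    simp at e0 e1 e2
    funext i; fin_cases i <;> simp <;> omega
  · by_cases h2 : cond2 v
    · rw [step_c2 h2] at hc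
      have e0 := hc 0; have e1 := hc 1; have e2 := hc 2
      simp at e0 e1 e2
      funext i; fin_cases i <;> simp <;> omega
    · rw [step_c3 h1 h2] at hc
      have e0 := hc 0; have e1 := hc 1; have e2 := hc 2
      simp at e0 e1 e2
      funext i; fin_cases i <;> simp <;> omega

lemma dot3_neg (y : Z3) (v : R3) : dot3 (-y) v = -dot3 y v := by
  rw [dot3, dot3, ← Finset.sum_neg_distrib]
  refine Finset.sum_congr rfl fun i _ => ?_
  simp

lemma step_neg (v : R3) (y : Z3) : step v (-y) = -(step v y) := by
  by_cases h1 : cond1 v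
  · rw [step_c1 h1, step_c1 h1]
    funext i; fin_cases i <;> simp <;> ring
  · by_cases h2 : cond2 v
    · rw [step_c2 h2, step_c2 h2]
      funext i; fin_cases i <;> simp <;> ring
    · rw [step_c3 h1 h2, step_c3 h1 h2]
      funext i; fin_cases i <;> simp <;> ring
lemma natAbs_le_iff {z : ℤ} {B : ℕ} : z.natAbs ≤ B ↔ -(B:ℤ) ≤ z ∧ z ≤ B := by omega

lemma sigma_aux (v : R3) (hO : v ∈ O3) (htri : v 2 < v 0 + v 1) (y : Z3)
    (hd : dot3 y v = 0) (hy : y ≠ 0) (B : ℕ) (hb : ∀ i, (y i).natAbs ≤ B)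
    (hnn : 0 ≤ y 0 + y 1 + y 2) :
    (y 0 + y 1 + y 2).natAbs < B := by
  obtain ⟨h0, h01, h12⟩ := hO
  have hv0 : 0 < v 0 := by
    rcases h0.lt_or_eq with h | h
    · exact h
    · exfalso; rw [← h] at h01; linarith
  by_contra hcon
  push_neg at hcon
  -- real versions
  have hσ : (B : ℝ) ≤ (y 0 : ℝ) + (y 1 : ℝ) + (y 2 : ℝ) := by
    have : (B : ℤ) ≤ y 0 + y 1 + y 2 := by omega
    exact_mod_cast this
  have ha0 : (y 0 : ℝ) ≤ B := by exact_mod_cast (natAbs_le_iff.1 (hb 0)).2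
  have ha1 : (y 1 : ℝ) ≤ B := by exact_mod_cast (natAbs_le_iff.1 (hb 1)).2
  have ha2 : (y 2 : ℝ) ≤ B := by exact_mod_cast (natAbs_le_iff.1 (hb 2)).2
  set a : ℝ := (y 0 : ℝ) with hadef
  set b : ℝ := (y 1 : ℝ) with hbdef
  set c : ℝ := (y 2 : ℝ) with hcdef
  have hp : 0 ≤ b + c := by linarith
  have hq : 0 ≤ a + c := by linarith
  have hr : 0 ≤ a + b := by linarith
  have hc1 : 0 < v 1 + v 2 - v 0 := by linarith
  have hc2 : 0 < v 0 + v 2 - v 1 := by linarith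
  have hc3 : 0 < v 0 + v 1 - v 2 := by linarith
  have hid : (b + c) * (v 1 + v 2 - v 0) + (a + c) * (v 0 + v 2 - v 1)
      + (a + b) * (v 0 + v 1 - v 2) = 2 * dot3 y v := by
    rw [dot3, Fin.sum_univ_three]; ring
  rw [hd, mul_zero] at hid
  have t1 : 0 ≤ (b + c) * (v 1 + v 2 - v 0) := mul_nonneg hp hc1.le
  have t2 : 0 ≤ (a + c) * (v 0 + v 2 - v 1) := mul_nonneg hq hc2.le
  have t3 : 0 ≤ (a + b) * (v 0 + v 1 - v 2) := mul_nonneg hr hc3.le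
  have z1 : (b + c) * (v 1 + v 2 - v 0) = 0 := by linarith
  have z2 : (a + c) * (v 0 + v 2 - v 1) = 0 := by linarith
  have z3 : (a + b) * (v 0 + v 1 - v 2) = 0 := by linarith
  have e1 : b + c = 0 := by
    rcases mul_eq_zero.1 z1 with h | h
    · exact h
    · exact absurd h hc1.ne'
  have e2 : a + c = 0 := by
    rcases mul_eq_zero.1 z2 with h | h
    · exact h
    · exact absurd h hc2.ne'
  have e3 : a + b = 0 := by
    rcases mul_eq_zero.1 z3 with h | h
    · exact h
    · exact absurd h hc3.ne'
  have ea : a = 0 := by linarith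
  have eb : b = 0 := by linarith
  have ec : c = 0 := by linarith
  apply hy
  rw [hadef] at ea
  rw [hbdef] at eb
  rw [hcdef] at ec
  have y0 : y 0 = 0 := by exact_mod_cast ea
  have y1 : y 1 = 0 := by exact_mod_cast eb
  have y2 : y 2 = 0 := by exact_mod_cast ec
  funext i; fin_cases i <;> simpa

lemma sigma_lt (v : R3) (hO : v ∈ O3) (htri : v 2 < v 0 + v 1) (y : Z3)
    (hd : dot3 y v = 0) (hy : y ≠ 0) (B : ℕ) (hb : ∀ i, (y i).natAbs ≤ B) :
    (y 0 + y 1 + y 2).natAbs < B := by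
  rcases le_or_gt 0 (y 0 + y 1 + y 2) with h | h
  · exact sigma_aux v hO htri y hd hy B hb h
  · have hneg : ((-y) 0 + (-y) 1 + (-y) 2).natAbs < B := by
      apply sigma_aux v hO htri (-y) (by rw [dot3_neg, hd, neg_zero])
        (by intro hz; apply hy; funext i
            have := congrFun hz i; simpa [neg_eq_zero] using this)
        B (by intro i; simpa using hb i)
      simp only [Pi.neg_apply]; omega
    simp only [Pi.neg_apply] at hneg; omega
lemma exists_not_cond1 {v : R3} (hv : v ∈ F3set) (K : ℕ) :
    ∃ m, K ≤ m ∧ ¬ cond1 (FS^[m] v) := by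
  by_contra hcon
  push_neg at hcon
  set w : R3 := FS^[K] v with hw
  have hwF : w ∈ F3set := F3_iter hv K
  have hall : ∀ k, cond1 (FS^[k] w) := by
    intro k
    have h := hcon (k + K) (Nat.le_add_left K k)
    rwa [Function.iterate_add_apply] at h
  have hcomp : ∀ k, (FS^[k] w) 0 = w 0 ∧ (FS^[k] w) 1 = w 1 - k * w 0 := by
    intro k
    induction k with
    | zero => simp
    | succ k ih =>
      rw [Function.iterate_succ_apply', FS_c1 (hall k)]
      constructor
      · simp [ih.1]
      · simp only [Matrix.cons_val_one, Matrix.head_cons]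
        rw [ih.1, ih.2]; push_cast; ring
  have hw0 : 0 < w 0 := F3_pos hwF
  obtain ⟨k, hk⟩ := exists_nat_gt (w 1 / w 0)
  have hle : (FS^[k] w) 0 ≤ (FS^[k] w) 1 := (F3_iter hwF k).1.2.1
  rw [(hcomp k).1, (hcomp k).2] at hle
  have : w 1 / w 0 < k := hk
  rw [div_lt_iff₀ hw0] at this
  linarith

lemma final_case (v : R3) (hv : v ∈ F3set) (M : ℕ) (hM : 0 < M) (Y : ℕ → Z3)
    (hrec : ∀ n, Y (n + 1) = step (FS^[n] v) (Y n))
    (hdot : ∀ n, dot3 (Y n) (FS^[n] v) = 0)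
    (hb : ∀ n, cond1 (FS^[n] v) ∨ cond2 (FS^[n] v))
    (h2 : ∀ n, Y n 2 = (M : ℤ))
    (hbd : ∀ n i, (Y n i).natAbs ≤ M) : False := by
  set u0 : ℕ → ℤ := fun n => Y n 0 + M with hu0
  set u1 : ℕ → ℤ := fun n => Y n 1 + M with hu1
  set S : ℕ → ℤ := fun n => u0 n + u1 n with hS
  have hu0nn : ∀ n, 0 ≤ u0 n := by intro n; have := hbd n 0; simp [hu0]; omega
  have hu1nn : ∀ n, 0 ≤ u1 n := by intro n; have := hbd n 1; simp [hu1]; omega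
  have hSbd : ∀ n, S n ≤ 4 * M := by
    intro n; have := hbd n 0; have := hbd n 1; simp [hS, hu0, hu1]; omega
  have hstep : ∀ n, S (n + 1) = S n + u1 n := by
    intro n
    rcases hb n with h | h
    · rw [hS, hu0, hu1]
      simp only
      rw [hrec n, step_c1 h]
      have := h2 n
      simp; omega
    · rw [hS, hu0, hu1]
      simp only
      rw [hrec n, step_c2 h]
      have := h2 n
      simp; omega
  have hmono : ∀ m n, m ≤ n → S m ≤ S n := by
    intro m n hmn
    induction n with
    | zero => have : m = 0 := by omega
              rw [this]
    | succ n ih =>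
      rcases Nat.lt_or_ge m (n + 1) with h | h
      · have := ih (by omega)
        have := hstep n
        have := hu1nn n
        omega
      · have : m = n + 1 := by omega
        rw [this]
  have hK : ∃ K, ∀ k, K ≤ k → u1 k = 0 := by
    by_contra hcon
    push_neg at hcon
    have hgrow : ∀ j : ℕ, ∃ n, S 0 + j ≤ S n := by
      intro j
      induction j with
      | zero => exact ⟨0, by simp⟩
      | succ j ih =>
        obtain ⟨n, hn⟩ := ih
        obtain ⟨k, hk, hk1⟩ := hcon n
        have h1 : 1 ≤ u1 k := by have := hu1nn k; omega
        have h2 : S n ≤ S k := hmono n k hk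
        have h3 := hstep k
        exact ⟨k + 1, by push_cast; omega⟩
    obtain ⟨n, hn⟩ := hgrow (4 * M + 1)
    have := hSbd n
    have hS0 : 0 ≤ S 0 := by
      rw [hS]; exact add_nonneg (hu0nn 0) (hu1nn 0)
    push_cast at hn
    omega
  obtain ⟨K, hKz⟩ := hK
  obtain ⟨m, hmK, hm1⟩ := exists_not_cond1 hv K
  have hc2 : cond2 (FS^[m] v) := (hb m).resolve_left hm1
  have e1 : u1 (m + 1) = u0 m + u1 m := by
    rw [hu0, hu1]
    simp only
    rw [hrec m, step_c2 hc2]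
    have := h2 m
    simp; omega
  have z1 : u1 m = 0 := hKz m hmK
  have z2 : u1 (m + 1) = 0 := hKz (m + 1) (by omega)
  have z0 : u0 m = 0 := by omega
  have hY0 : Y m 0 = -(M : ℤ) := by rw [hu0] at z0; simp at z0; omega
  have hY1 : Y m 1 = -(M : ℤ) := by rw [hu1] at z1; simp at z1; omega
  have htri := hv.2 m
  have hd := hdot m
  rw [dot3, Fin.sum_univ_three, hY0, hY1, h2 m] at hd
  push_cast at hd
  have hMR : (0:ℝ) < M := by exact_mod_cast hM
  nlinarith [hd, htri, hMR]
def Yseq (v : R3) (y : Z3) : ℕ → Z3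
  | 0 => y
  | n + 1 => step (FS^[n] v) (Yseq v y n)

lemma key (M : ℕ) : ∀ v : R3, v ∈ F3set → ∀ y : Z3,
    (∀ i, (y i).natAbs ≤ M) → dot3 y v = 0 → y = 0 := by
  induction M using Nat.strong_induction_on with
  | _ M IH =>
  intro v hv y hyb hyd
  by_contra hy0
  rcases Nat.eq_zero_or_pos M with hM0 | hM1
  · apply hy0; funext i
    have := hyb i; rw [hM0] at this
    simpa using Int.natAbs_eq_zero.mp (Nat.le_zero.mp this)
  set W : ℕ → R3 := fun n => FS^[n] v with hW
  set Y : ℕ → Z3 := Yseq v y with hY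
  have hWF : ∀ n, W n ∈ F3set := fun n => F3_iter hv n
  have hYrec : ∀ n, Y (n + 1) = step (W n) (Y n) := by
    intro n; rw [hY, hW]; simp only [Yseq]
  have hWs : ∀ n, W (n + 1) = FS (W n) := by
    intro n; rw [hW]; simp only; rw [Function.iterate_succ_apply']
  have hYd : ∀ n, dot3 (Y n) (W n) = 0 := by
    intro n; induction n with
    | zero => simpa [hY, hW, Yseq] using hyd
    | succ n ih => rw [hYrec n, hWs n, dot3_step, ih]
  have hYne : ∀ n, Y n ≠ 0 := by
    intro n; induction n with
    | zero => simpa [hY, Yseq] using hy0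
    | succ n ih => rw [hYrec n]; exact step_ne_zero ih
  have hYb : ∀ n, ∀ i, (Y n i).natAbs ≤ M := by
    intro n; induction n with
    | zero => simpa [hY, Yseq] using hyb
    | succ n ih =>
      have hσ : (Y n 0 + Y n 1 + Y n 2).natAbs < M :=
        sigma_lt (W n) (hWF n).1 (F3_tri (hWF n)) (Y n) (hYd n) (hYne n) M ih
      have i0 := ih 0; have i1 := ih 1; have i2 := ih 2
      intro i
      by_cases h1 : cond1 (W n)
      · rw [hYrec n, step_c1 h1]; fin_cases i <;> simp <;> omega
      · by_cases h2 : cond2 (W n)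
        · rw [hYrec n, step_c2 h2]; fin_cases i <;> simp <;> omega
        · rw [hYrec n, step_c3 h1 h2]; fin_cases i <;> simp <;> omega
  have hσall : ∀ n, (Y n 0 + Y n 1 + Y n 2).natAbs < M := fun n =>
    sigma_lt (W n) (hWF n).1 (F3_tri (hWF n)) (Y n) (hYd n) (hYne n) M (hYb n)
  set ind : ℤ → ℕ := fun z => if z.natAbs = M then 1 else 0 with hind
  set P : ℕ → ℕ := fun n => ind (Y n 0) + 2 * ind (Y n 1) + 3 * ind (Y n 2) with hP
  have hind1 : ∀ z : ℤ, z.natAbs = M → ind z = 1 := by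
    intro z hz; simp only [hind]; rw [if_pos hz]
  have hind0 : ∀ z : ℤ, z.natAbs ≠ M → ind z = 0 := by
    intro z hz; simp only [hind]; rw [if_neg hz]
  have hindσ : ∀ n, ind (Y n 0 + Y n 1 + Y n 2) = 0 := by
    intro n; apply hind0; have := hσall n; omega
  have hcomp : ∀ n, ∀ a b c : ℤ, Y (n+1) = ![a, b, c] →
      Y (n+1) 0 = a ∧ Y (n+1) 1 = b ∧ Y (n+1) 2 = c := by
    intro n a b c h; rw [h]
    refine ⟨rfl, rfl, rfl⟩
  have hT1 : ∀ n, cond1 (W n) → P n = P (n + 1) + ind (Y n 0) := by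
    intro n h1
    obtain ⟨c0, c1, c2⟩ := hcomp n _ _ _ (by rw [hYrec n, step_c1 h1])
    rw [hP]; simp only
    rw [c0, c1, c2, hindσ n]
    omega
  have hT2 : ∀ n, cond2 (W n) → P n = P (n + 1) + ind (Y n 0) + ind (Y n 1) := by
    intro n h2
    obtain ⟨c0, c1, c2⟩ := hcomp n _ _ _ (by rw [hYrec n, step_c2 h2])
    rw [hP]; simp only
    rw [c0, c1, c2, hindσ n]
    omega
  have hT3 : ∀ n, ¬ cond1 (W n) → ¬ cond2 (W n) →
      P n = P (n + 1) + ind (Y n 0) + ind (Y n 1) + ind (Y n 2) := by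
    intro n h1 h2
    obtain ⟨c0, c1, c2⟩ := hcomp n _ _ _ (by rw [hYrec n, step_c3 h1 h2])
    rw [hP]; simp only
    rw [c0, c1, c2, hindσ n]
    omega
  have hPle : ∀ n, P (n + 1) ≤ P n := by
    intro n
    by_cases h1 : cond1 (W n)
    · have := hT1 n h1; omega
    · by_cases h2 : cond2 (W n)
      · have := hT2 n h2; omega
      · have := hT3 n h1 h2; omega
  have hPanti : Antitone P := antitone_nat_of_succ_le hPle
  obtain ⟨N, hN⟩ : ∃ N, P N = sInf (Set.range P) := by
    have := Nat.sInf_mem (Set.range_nonempty P)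
    obtain ⟨N, hN⟩ := this
    exact ⟨N, hN⟩
  have hconst : ∀ n, N ≤ n → P n = P N := by
    intro n hn
    refine le_antisymm (hPanti hn) ?_
    rw [hN]; exact Nat.sInf_le ⟨n, rfl⟩
  by_cases hA : ∃ n, N ≤ n ∧ (Y n 0).natAbs ≠ M ∧ (Y n 1).natAbs ≠ M ∧ (Y n 2).natAbs ≠ M
  · obtain ⟨n, hn, e0, e1, e2⟩ := hA
    have b0 := hYb n 0; have b1 := hYb n 1; have b2 := hYb n 2
    have hble : ∀ i, (Y n i).natAbs ≤ M - 1 := by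
      intro i; fin_cases i <;> simp <;> omega
    have := IH (M - 1) (by omega) (W n) (hWF n) (Y n) hble (hYd n)
    exact hYne n this
  push_neg at hA
  have hB : ∀ n, N ≤ n → cond1 (W n) ∨ cond2 (W n) := by
    intro n hn
    by_contra hc; push_neg at hc
    have h3 := hT3 n hc.1 hc.2
    have q1 := hconst n hn
    have q2 := hconst (n + 1) (by omega)
    have n0 : (Y n 0).natAbs ≠ M := by
      intro h; have := hind1 _ h; omega
    have n1 : (Y n 1).natAbs ≠ M := by
      intro h; have := hind1 _ h; omega
    have n2 := hA n hn n0 n1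
    have := hind1 _ n2; omega
  have hA0 : ∀ n, N ≤ n → (Y n 0).natAbs ≠ M := by
    intro n hn hmax
    have hi0 := hind1 _ hmax
    have q1 := hconst n hn
    have q2 := hconst (n + 1) (by omega)
    rcases hB n hn with h | h
    · have := hT1 n h; omega
    · have := hT2 n h; omega
  have hA1 : ∀ n, N ≤ n → (Y n 1).natAbs ≠ M := by
    intro n hn hmax
    have hex : ∃ k, ¬ cond1 (W (n + k)) := by
      obtain ⟨m, hm, hmc⟩ := exists_not_cond1 hv n
      refine ⟨m - n, ?_⟩
      rw [show n + (m - n) = m by omega]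
      exact hmc
    have hkc : ¬ cond1 (W (n + Nat.find hex)) := Nat.find_spec hex
    have hpersist : ∀ j, j ≤ Nat.find hex → (Y (n + j) 1).natAbs = M := by
      intro j
      induction j with
      | zero => intro _; simpa using hmax
      | succ j ihj =>
        intro hj
        have hc1 : cond1 (W (n + j)) := not_not.mp (Nat.find_min hex (by omega))
        obtain ⟨c0, c1, c2⟩ := hcomp (n + j) _ _ _ (by rw [hYrec (n + j), step_c1 hc1])
        rw [show n + (j + 1) = n + j + 1 by omega, c1]
        exact ihj (by omega)
    have hnk : N ≤ n + Nat.find hex := by omega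
    have hc2 : cond2 (W (n + Nat.find hex)) := (hB _ hnk).resolve_left hkc
    have hmaxk := hpersist (Nat.find hex) le_rfl
    have hi1 := hind1 _ hmaxk
    have q1 := hconst (n + Nat.find hex) hnk
    have q2 := hconst (n + Nat.find hex + 1) (by omega)
    have := hT2 _ hc2; omega
  have hA2 : ∀ n, N ≤ n → (Y n 2).natAbs = M := fun n hn => hA n hn (hA0 n hn) (hA1 n hn)
  have hc2const : ∀ n, N ≤ n → Y n 2 = Y N 2 := by
    intro n hn
    induction n with
    | zero => have : N = 0 := by omega
              rw [this]
    | succ n ih =>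
      rcases Nat.lt_or_ge N (n + 1) with h | h
      · have hn' : N ≤ n := by omega
        have e : Y (n + 1) 2 = Y n 2 := by
          rcases hB n hn' with hbb | hbb
          · exact (hcomp n _ _ _ (by rw [hYrec n, step_c1 hbb])).2.2
          · exact (hcomp n _ _ _ (by rw [hYrec n, step_c2 hbb])).2.2
        rw [e]; exact ih hn'
      · have : N = n + 1 := by omega
        rw [this]
  have hcM : (Y N 2).natAbs = M := hA2 N le_rfl
  have hWshift : ∀ k, FS^[k] (W N) = W (N + k) := by
    intro k; rw [hW]; simp only
    rw [← Function.iterate_add_apply]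
    congr 1; omega
  have hWNF : W N ∈ F3set := hWF N
  have hbranch : ∀ k, cond1 (FS^[k] (W N)) ∨ cond2 (FS^[k] (W N)) := by
    intro k; rw [hWshift k]; exact hB (N + k) (by omega)
  rcases Int.natAbs_eq (Y N 2) with hcc | hcc
  · refine final_case (W N) hWNF M hM1 (fun k => Y (N + k)) ?_ ?_ hbranch ?_ ?_
    · intro k
      show Y (N + (k + 1)) = step (FS^[k] (W N)) (Y (N + k))
      rw [show N + (k + 1) = (N + k) + 1 by omega, hYrec (N + k), hWshift k]
    · intro k; rw [hWshift k]; exact hYd (N + k)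
    · intro k
      show Y (N + k) 2 = (M : ℤ)
      rw [hc2const (N + k) (by omega), ← hcM, ← hcc]
    · intro k i; exact hYb (N + k) i
  · refine final_case (W N) hWNF M hM1 (fun k => -(Y (N + k))) ?_ ?_ hbranch ?_ ?_
    · intro k
      show -(Y (N + (k + 1))) = step (FS^[k] (W N)) (-(Y (N + k)))
      rw [show N + (k + 1) = (N + k) + 1 by omega, hYrec (N + k), hWshift k, step_neg]
    · intro k
      show dot3 (-(Y (N + k))) (FS^[k] (W N)) = 0
      rw [hWshift k, dot3_neg, hYd (N + k), neg_zero]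
    · intro k
      show (-(Y (N + k))) 2 = (M : ℤ)
      have h5 := hc2const (N + k) (by omega)
      simp only [Pi.neg_apply]
      rw [h5, hcc, hcM]; ring
    · intro k i
      show ((-(Y (N + k))) i).natAbs ≤ M
      simp only [Pi.neg_apply, Int.natAbs_neg]; exact hYb (N + k) i
theorem F3_rationally_independent' (v : R3) (hv : v ∈ F3set) :
    Module.finrank ℚ (Submodule.span ℚ ({v 0, v 1, v 2} : Set ℝ)) = 3 ∧
    LinearIndependent ℚ ![v 0, v 1, v 2] ∧
    ∀ x : Z3, dot3 x v = 0 → x = 0 := by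
  have hkey : ∀ x : Z3, dot3 x v = 0 → x = 0 := by
    intro x hx
    exact key ((x 0).natAbs ⊔ (x 1).natAbs ⊔ (x 2).natAbs) v hv x
      (by intro i; fin_cases i <;> simp <;> omega) hx
  have hZ : LinearIndependent ℤ ![v 0, v 1, v 2] := by
    rw [Fintype.linearIndependent_iff]
    intro g hg
    have hdg : dot3 g v = 0 := by
      rw [dot3, Fin.sum_univ_three]
      rw [Fin.sum_univ_three] at hg
      simpa [zsmul_eq_mul] using hg
    have := hkey g hdg
    intro i; rw [this]; rfl
  have hQ : LinearIndependent ℚ ![v 0, v 1, v 2] :=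
    (LinearIndependent.iff_fractionRing ℤ ℚ).mp hZ
  refine ⟨?_, hQ, hkey⟩
  have hset : ({v 0, v 1, v 2} : Set ℝ) = Set.range ![v 0, v 1, v 2] := by
    ext x
    constructor
    · rintro (rfl | rfl | rfl)
      · exact ⟨0, rfl⟩
      · exact ⟨1, rfl⟩
      · exact ⟨2, rfl⟩
    · rintro ⟨i, rfl⟩
      fin_cases i
      · left; rfl
      · right; left; rfl
      · right; right; rfl
  rw [hset, finrank_span_eq_card hQ]
  simp

/-- If `v ∈ F₃` then `dim_ℚ(v₁,v₂,v₃) = 3`; that is, `v₁,v₂,v₃` are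
ℚ-linearly independent; equivalently, the only `x ∈ ℤ³` with `⟨v, x⟩ = 0` is `x = 0`. -/
theorem F3_rationally_independent (v : R3) (hv : v ∈ F3set) :
    Module.finrank ℚ (Submodule.span ℚ ({v 0, v 1, v 2} : Set ℝ)) = 3 ∧
    LinearIndependent ℚ ![v 0, v 1, v 2] ∧
    ∀ x : Z3, dot3 x v = 0 → x = 0 := by
  exact F3_rationally_independent' v hv
end
end

section
/- Let v ∈ F₃ and let (Tₙ)ₙ be the associated sequence of subsets of ℤ³. Then for every n ∈ ℕ, the set Tₙ is 2-connected. -/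
open Matrix
open scoped Classical

noncomputable section

/-! ### Auxiliary material for the proof -/

lemma adj3_symm {x y : Z3} (h : adj3 x y) : adj3 y x := by
  unfold adj3 at h ⊢
  rw [Finset.sum_congr rfl fun i _ => abs_sub_comm (y i) (x i)]
  exact h

lemma connected3_union {A B : Set Z3} (hA : Connected3 A) (hB : Connected3 B)
    {a0 b0 : Z3} (ha : a0 ∈ A) (hb : b0 ∈ B) (hab : adj3 a0 b0) :
    Connected3 (A ∪ B) := by
  obtain ⟨hAne, hAc⟩ := hA
  obtain ⟨hBne, hBc⟩ := hB
  have liftA : ∀ {x y : Z3}, Relation.ReflTransGen (fun a b => b ∈ A ∧ adj3 a b) x y →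
      Relation.ReflTransGen (fun a b => b ∈ A ∪ B ∧ adj3 a b) x y :=
    fun h => Relation.ReflTransGen.mono (fun a b hb => ⟨Or.inl hb.1, hb.2⟩) _ _ h
  have liftB : ∀ {x y : Z3}, Relation.ReflTransGen (fun a b => b ∈ B ∧ adj3 a b) x y →
      Relation.ReflTransGen (fun a b => b ∈ A ∪ B ∧ adj3 a b) x y :=
    fun h => Relation.ReflTransGen.mono (fun a b hb => ⟨Or.inr hb.1, hb.2⟩) _ _ h
  have crossAB : Relation.ReflTransGen (fun a b => b ∈ A ∪ B ∧ adj3 a b) a0 b0 :=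
    Relation.ReflTransGen.single ⟨Or.inr hb, hab⟩
  have crossBA : Relation.ReflTransGen (fun a b => b ∈ A ∪ B ∧ adj3 a b) b0 a0 :=
    Relation.ReflTransGen.single ⟨Or.inl ha, adj3_symm hab⟩
  refine ⟨⟨a0, Or.inl ha⟩, ?_⟩
  rintro x (hx | hx) y (hy | hy)
  · exact liftA (hAc x hx y hy)
  · exact ((liftA (hAc x hx a0 ha)).trans crossAB).trans (liftB (hBc b0 hb y hy))
  · exact ((liftB (hBc x hx b0 hb)).trans crossBA).trans (liftA (hAc a0 ha y hy))
  · exact liftB (hBc x hx y hy)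

lemma connected3_image_add {A : Set Z3} (hA : Connected3 A) (t : Z3) :
    Connected3 ((fun x => x + t) '' A) := by
  obtain ⟨hne, hc⟩ := hA
  constructor
  · exact hne.image _
  · rintro x ⟨x', hx', rfl⟩ y ⟨y', hy', rfl⟩
    refine Relation.ReflTransGen.lift (fun z => z + t) ?_ _ _ (hc x' hx' y' hy')
    rintro a b ⟨hbA, hab⟩
    refine ⟨⟨b, hbA, rfl⟩, ?_⟩
    unfold adj3 at hab ⊢
    simpa using hab

lemma zero_mem_Tseq (v : R3) (n : ℕ) : (0 : Z3) ∈ Tseq v n := by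
  induction n with
  | zero => rfl
  | succ n ih => exact Or.inl ih

lemma FSidx_cases (w : R3) : FSidx w = 0 ∨ FSidx w = 1 ∨ FSidx w = 2 := by
  unfold FSidx; split_ifs <;> simp

/-- The rows of `(M₁⋯Mₙ)⁻¹`, computed by the branch recursion. -/
def ABC (v : R3) : ℕ → (Z3 × Z3 × Z3)
  | 0 => (![1,0,0], ![0,1,0], ![0,0,1])
  | n+1 =>
    let p := ABC v n
    let i := FSidx (FS^[n] v)
    if i = 0 then (p.1, p.2.1 - p.1, p.2.2 - p.1)
    else if i = 1 then (p.2.1 - p.1, p.1, p.2.2 - p.1)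
    else (p.2.1 - p.1, p.2.2 - p.1, p.1)

lemma ABC_succ (v : R3) (n : ℕ) : ABC v (n+1) =
    let p := ABC v n
    let i := FSidx (FS^[n] v)
    if i = 0 then (p.1, p.2.1 - p.1, p.2.2 - p.1)
    else if i = 1 then (p.2.1 - p.1, p.1, p.2.2 - p.1)
    else (p.2.1 - p.1, p.2.2 - p.1, p.1) := rfl

lemma prodM_succ (v : R3) (n : ℕ) :
    prodM v (n+1) = prodM v n * Mmat (FSidx (FS^[n] v)) := by
  unfold prodM
  rw [List.range_succ, List.map_append, List.prod_append]
  simp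

lemma ABC_vecMul (v : R3) (n : ℕ) :
    (ABC v n).1 ᵥ* prodM v n = ![1,0,0] ∧
    (ABC v n).2.1 ᵥ* prodM v n = ![0,1,0] ∧
    (ABC v n).2.2 ᵥ* prodM v n = ![0,0,1] := by
  induction n with
  | zero =>
    have h : prodM v 0 = 1 := rfl
    simp [ABC, h]
  | succ n ih =>
    obtain ⟨h1, h2, h3⟩ := ih
    rw [prodM_succ]
    rcases FSidx_cases (FS^[n] v) with hi | hi | hi <;>
      rw [ABC_succ, hi] <;>
      simp only [reduceIte, show ((1:Fin 3) = 0) = False by simp, show ((2:Fin 3) = 0) = False by simp,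
        show ((2:Fin 3) = 1) = False by simp, if_false, if_true] <;>
      refine ⟨?_, ?_, ?_⟩ <;>
      rw [← Matrix.vecMul_vecMul] <;>
      simp only [Matrix.sub_vecMul, h1, h2, h3] <;> decide

lemma isUnit_det_prodM (v : R3) (n : ℕ) : IsUnit (prodM v n).det := by
  induction n with
  | zero =>
    have h : prodM v 0 = 1 := rfl
    simp [h]
  | succ n ih =>
    rw [prodM_succ, Matrix.det_mul]
    refine ih.mul ?_
    rcases FSidx_cases (FS^[n] v) with hi | hi | hi <;> rw [hi] <;>
      [exact IsUnit.of_mul_eq_one 1 (by decide);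
       exact IsUnit.of_mul_eq_one (-1) (by decide);
       exact IsUnit.of_mul_eq_one 1 (by decide)]

lemma transVec_eq (v : R3) (n : ℕ) : transVec v n = (ABC v n).1 := by
  have h := (ABC_vecMul v n).1
  have hdet : IsUnit ((prodM v n)ᵀ).det := by
    rw [Matrix.det_transpose]; exact isUnit_det_prodM v n
  have h2 : (prodM v n)ᵀ *ᵥ (ABC v n).1 = e1 := by
    rw [Matrix.mulVec_transpose, h]; rfl
  calc transVec v n = ((prodM v n)ᵀ)⁻¹ *ᵥ ((prodM v n)ᵀ *ᵥ (ABC v n).1) := by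
        rw [h2]; rfl
    _ = (ABC v n).1 := by
        rw [Matrix.mulVec_mulVec, Matrix.nonsing_inv_mul _ hdet, Matrix.one_mulVec]

lemma Tseq_invariant (v : R3) (n : ℕ) :
    Connected3 (Tseq v n) ∧
    ∃ pa pb pc : Z3, pa ∈ Tseq v n ∧ pb ∈ Tseq v n ∧ pc ∈ Tseq v n ∧
      adj3 ((ABC v n).1 + pa) 0 ∧ adj3 ((ABC v n).2.1 + pb) 0 ∧
      adj3 ((ABC v n).2.2 + pc) 0 := by
  induction n with
  | zero =>
    constructor
    · refine ⟨⟨0, rfl⟩, ?_⟩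
      intro x hx y hy
      have hx' : x = 0 := hx
      have hy' : y = 0 := hy
      subst hx'; subst hy'; exact Relation.ReflTransGen.refl
    · exact ⟨0, 0, 0, rfl, rfl, rfl,
        show adj3 (![1,0,0] + 0) 0 by unfold adj3; decide,
        show adj3 (![0,1,0] + 0) 0 by unfold adj3; decide,
        show adj3 (![0,0,1] + 0) 0 by unfold adj3; decide⟩
  | succ n ih =>
    obtain ⟨hconn, pa, pb, pc, hpa, hpb, hpc, ua, ub, uc⟩ := ih
    have ht : transVec v n = (ABC v n).1 := transVec_eq v n
    have hconn' : Connected3 ((fun x => x + transVec v n) '' Tseq v n) :=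
      connected3_image_add hconn _
    have hb0 : pa + transVec v n ∈ (fun x => x + transVec v n) '' Tseq v n :=
      ⟨pa, hpa, rfl⟩
    have hadj : adj3 0 (pa + transVec v n) := by
      rw [ht, add_comm]; exact adj3_symm ua
    have hC : Connected3 (Tseq v (n+1)) :=
      connected3_union hconn hconn' (zero_mem_Tseq v n) hb0 hadj
    refine ⟨hC, ?_⟩
    have memL : ∀ {p : Z3}, p ∈ Tseq v n → p ∈ Tseq v (n+1) := fun h => Or.inl h
    have memR : ∀ {p : Z3}, p ∈ Tseq v n → p + transVec v n ∈ Tseq v (n+1) :=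
      fun h => Or.inr ⟨_, h, rfl⟩
    rcases FSidx_cases (FS^[n] v) with hi | hi | hi <;>
      rw [ABC_succ, hi] <;>
      simp only [reduceIte, show ((1:Fin 3) = 0) = False by simp, show ((2:Fin 3) = 0) = False by simp,
        show ((2:Fin 3) = 1) = False by simp, if_false, if_true]
    · refine ⟨pa, pb + transVec v n, pc + transVec v n, memL hpa, memR hpb, memR hpc,
        ua, ?_, ?_⟩
      · have e : (ABC v n).2.1 - (ABC v n).1 + (pb + transVec v n)
            = (ABC v n).2.1 + pb := by rw [ht]; abel
        rw [e]; exact ub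
      · have e : (ABC v n).2.2 - (ABC v n).1 + (pc + transVec v n)
            = (ABC v n).2.2 + pc := by rw [ht]; abel
        rw [e]; exact uc
    · refine ⟨pb + transVec v n, pa, pc + transVec v n, memR hpb, memL hpa, memR hpc,
        ?_, ua, ?_⟩
      · have e : (ABC v n).2.1 - (ABC v n).1 + (pb + transVec v n)
            = (ABC v n).2.1 + pb := by rw [ht]; abel
        rw [e]; exact ub
      · have e : (ABC v n).2.2 - (ABC v n).1 + (pc + transVec v n)
            = (ABC v n).2.2 + pc := by rw [ht]; abel
        rw [e]; exact uc
    · refine ⟨pb + transVec v n, pc + transVec v n, pa, memR hpb, memR hpc, memL hpa,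
        ?_, ?_, ua⟩
      · have e : (ABC v n).2.1 - (ABC v n).1 + (pb + transVec v n)
            = (ABC v n).2.1 + pb := by rw [ht]; abel
        rw [e]; exact ub
      · have e : (ABC v n).2.2 - (ABC v n).1 + (pc + transVec v n)
            = (ABC v n).2.2 + pc := by rw [ht]; abel
        rw [e]; exact uc

/-- For `v ∈ F₃`, every `Tₙ` is 2-connected. -/
theorem Tseq_connected (v : R3) (hv : v ∈ F3set) (n : ℕ) :
    Connected3 (Tseq v n) := by
  exact (Tseq_invariant v n).1
end
end
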